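/- Let B₁, …, B_n be crystals and let b_p ∈ B_p for 1 ≤ p ≤ n. Then for every k ∈ I, in the iterated tensor product B₁ ⊗ ⋯ ⊗ B_n: ẽ_k(b₁ ⊗ ⋯ ⊗ b_n) = b₁ ⊗ ⋯ ⊗ (ẽ_k b_p) ⊗ ⋯ ⊗ b_n where p = min{q : ε_k^q = ε_k(b₁ ⊗ ⋯ ⊗ b_n)}, and f̃_k(b₁ ⊗ ⋯ ⊗ b_n) = b₁ ⊗ ⋯ ⊗ (f̃_k b_p) ⊗ ⋯ ⊗ b_n where p = max{q : φ_k^q = φ_k(b₁ ⊗ ⋯ ⊗ b_n)}; here ε_k^p = ε_k(b_p) − ∑_{q < p} wt_k(b_q) and φ_k^p = φ_k(b_p) + ∑_{q > p} wt_k(b_q). -/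

import Mathlib

/-!
Crystals associated with a root datum: a free `ℤ`-module `P` (weight lattice),
simple roots `α k ∈ P` and simple coroots `co k : P →+ ℤ` for `k` in an index
set `I`.  The string functions `ε, φ` take values in `ℤ ∪ {−∞}`, modeled by
`WithBot ℤ`, and the Kashiwara operators `ẽ, f̃` take values in `B ⊔ {0}`,
modeled by `Option B` (`none` playing the role of `0`).
-/

noncomputable section

/-- The underlying data of a crystal on a set `B`. -/
structure PreCrystal (I : Type*) (P : Type*) (B : Type*) where
  wt : B → P
  eps : I → B → WithBot ℤ
  phi : I → B → WithBot ℤ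
  e : I → B → Option B
  f : I → B → Option B

/-- The crystal axioms (i)–(v). -/
structure IsCrystal {I P B : Type*} [AddCommGroup P]
    (α : I → P) (co : I → P →+ ℤ) (c : PreCrystal I P B) : Prop where
  phi_eq : ∀ k b, c.phi k b = c.eps k b + (co k (c.wt b) : WithBot ℤ)
  wt_e : ∀ k b b', c.e k b = some b' → c.wt b' = c.wt b + α k
  eps_e : ∀ k b b', c.e k b = some b' → c.eps k b' + 1 = c.eps k b
  phi_e : ∀ k b b', c.e k b = some b' → c.phi k b' = c.phi k b + 1
  wt_f : ∀ k b b', c.f k b = some b' → c.wt b' = c.wt b - α k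
  eps_f : ∀ k b b', c.f k b = some b' → c.eps k b' = c.eps k b + 1
  phi_f : ∀ k b b', c.f k b = some b' → c.phi k b' + 1 = c.phi k b
  ef_iff : ∀ k b b', c.f k b = some b' ↔ c.e k b' = some b
  e_bot : ∀ k b, c.phi k b = ⊥ → c.e k b = none
  f_bot : ∀ k b, c.phi k b = ⊥ → c.f k b = none

/-- `n`-th iterate `ẽ_k^n` of the Kashiwara operator `ẽ_k` (with value in
`B ⊔ {0}`, where `0` is absorbing). -/
def PreCrystal.eIter {I P B : Type*} (c : PreCrystal I P B) (k : I) :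
    ℕ → B → Option B
  | 0, b => some b
  | n + 1, b => (c.e k b).bind (c.eIter k n)

/-- `n`-th iterate `f̃_k^n` of the Kashiwara operator `f̃_k`. -/
def PreCrystal.fIter {I P B : Type*} (c : PreCrystal I P B) (k : I) :
    ℕ → B → Option B
  | 0, b => some b
  | n + 1, b => (c.f k b).bind (c.fIter k n)

/-- A crystal is normal if `ε_k(b) = max {n ≥ 0 : ẽ_k^n b ≠ 0}` and
`φ_k(b) = max {n ≥ 0 : f̃_k^n b ≠ 0}`. -/
def PreCrystal.IsNormal {I P B : Type*} (c : PreCrystal I P B) : Prop :=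
  ∀ (k : I) (b : B),
    (∃ n : ℕ, c.eIter k n b ≠ none ∧ c.eIter k (n + 1) b = none ∧
      c.eps k b = ((n : ℤ) : WithBot ℤ)) ∧
    (∃ n : ℕ, c.fIter k n b ≠ none ∧ c.fIter k (n + 1) b = none ∧
      c.phi k b = ((n : ℤ) : WithBot ℤ))

/-- The tensor product data on `B₁ × B₂`:
`wt(b₁⊗b₂) = wt b₁ + wt b₂`, `ε_k(b₁⊗b₂) = max(ε_k(b₁), ε_k(b₂) − wt_k(b₁))`,
`φ_k(b₁⊗b₂) = max(φ_k(b₂), φ_k(b₁) + wt_k(b₂))`,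
`ẽ_k` acts on the first factor if `φ_k(b₁) ≥ ε_k(b₂)` and on the second one
otherwise, and `f̃_k` acts on the first factor if `φ_k(b₁) > ε_k(b₂)` and on
the second one otherwise (with `b₁ ⊗ 0 = 0 ⊗ b₂ = 0`, via `Option.map`). -/
def PreCrystal.tensor {I P B₁ B₂ : Type*} [AddCommGroup P] (co : I → P →+ ℤ)
    (c₁ : PreCrystal I P B₁) (c₂ : PreCrystal I P B₂) :
    PreCrystal I P (B₁ × B₂) where
  wt b := c₁.wt b.1 + c₂.wt b.2
  eps k b := max (c₁.eps k b.1) (c₂.eps k b.2 + ((-(co k (c₁.wt b.1)) : ℤ) : WithBot ℤ))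
  phi k b := max (c₂.phi k b.2) (c₁.phi k b.1 + ((co k (c₂.wt b.2) : ℤ) : WithBot ℤ))
  e k b :=
    if c₂.eps k b.2 ≤ c₁.phi k b.1 then (c₁.e k b.1).map fun x => (x, b.2)
    else (c₂.e k b.2).map fun x => (b.1, x)
  f k b :=
    if c₂.eps k b.2 < c₁.phi k b.1 then (c₁.f k b.1).map fun x => (x, b.2)
    else (c₂.f k b.2).map fun x => (b.1, x)

universe u

/-- The underlying set of the iterated tensor product
`B 0 ⊗ B 1 ⊗ ⋯ ⊗ B n = ((B 0 ⊗ B 1) ⊗ ⋯) ⊗ B n`. -/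
def iterType (Bf : ℕ → Type u) : ℕ → Type u
  | 0 => Bf 0
  | n + 1 => iterType Bf n × Bf (n + 1)

/-- The iterated tensor product crystal
`c 0 ⊗ c 1 ⊗ ⋯ ⊗ c n = ((c 0 ⊗ c 1) ⊗ ⋯) ⊗ c n`. -/
def iterCrys {I P : Type*} [AddCommGroup P] (co : I → P →+ ℤ)
    (Bf : ℕ → Type u) (c : ∀ n, PreCrystal I P (Bf n)) :
    ∀ n : ℕ, PreCrystal I P (iterType Bf n)
  | 0 => c 0
  | n + 1 => PreCrystal.tensor co (iterCrys co Bf c n) (c (n + 1))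

/-- The element `b 0 ⊗ b 1 ⊗ ⋯ ⊗ b n` of the iterated tensor product. -/
def iterElt (Bf : ℕ → Type u) (b : ∀ n, Bf n) : ∀ n : ℕ, iterType Bf n
  | 0 => b 0
  | n + 1 => (iterElt Bf b n, b (n + 1))


section Aux

variable {I P : Type*} [AddCommGroup P] (co : I → P →+ ℤ)
  {Bf : ℕ → Type u} (c : ∀ n, PreCrystal I P (Bf n)) (b : ∀ n, Bf n) (k : I)

/-- `ε_k^p = ε_k(b_p) − ∑_{q<p} wt_k(b_q)`. -/
def epsP (p : ℕ) : WithBot ℤ :=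
  (c p).eps k (b p)
    + ((-(∑ q ∈ Finset.range p, co k ((c q).wt (b q))) : ℤ) : WithBot ℤ)

/-- `φ_k^p = φ_k(b_p) + ∑_{p<q≤n} wt_k(b_q)`. -/
def phiP (n p : ℕ) : WithBot ℤ :=
  (c p).phi k (b p)
    + ((∑ q ∈ Finset.Ioc p n, co k ((c q).wt (b q)) : ℤ) : WithBot ℤ)

/-- `ε_k` of the iterated tensor product. -/
def epsT (n : ℕ) : WithBot ℤ := (iterCrys co Bf c n).eps k (iterElt Bf b n)

/-- `φ_k` of the iterated tensor product. -/
def phiT (n : ℕ) : WithBot ℤ := (iterCrys co Bf c n).phi k (iterElt Bf b n)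

lemma wb_add_add (a : WithBot ℤ) (x y : ℤ) :
    a + (x : WithBot ℤ) + (y : WithBot ℤ) = a + ((x + y : ℤ) : WithBot ℤ) := by
  rw [add_assoc]; norm_cast

lemma wb_add_zero (a : WithBot ℤ) : a + ((0 : ℤ) : WithBot ℤ) = a := by
  rw [WithBot.coe_zero, add_zero]

lemma wb_cancel {a b : WithBot ℤ} (z : ℤ) (h : a + (z : WithBot ℤ) = b + z) : a = b :=
  WithBot.add_right_cancel WithBot.coe_ne_bot h

lemma wb_le_iff {a b : WithBot ℤ} (z : ℤ) : a + (z : WithBot ℤ) ≤ b + z ↔ a ≤ b :=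
  WithBot.add_le_add_iff_right WithBot.coe_ne_bot

lemma wb_lt_iff {a b : WithBot ℤ} (z : ℤ) : a + (z : WithBot ℤ) < b + z ↔ a < b :=
  WithBot.add_lt_add_iff_right WithBot.coe_ne_bot

lemma iter_wt (n : ℕ) :
    (iterCrys co Bf c n).wt (iterElt Bf b n)
      = ∑ q ∈ Finset.range (n + 1), (c q).wt (b q) := by
  induction n with
  | zero => simp [iterCrys, iterElt]
  | succ n ih => rw [Finset.sum_range_succ, ← ih]; rfl

lemma epsT_zero : epsT co c b k 0 = epsP co c b k 0 := by
  simp only [epsT, epsP, iterCrys, iterElt, Finset.range_zero, Finset.sum_empty, neg_zero]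
  rw [wb_add_zero]

lemma phiP_self (n : ℕ) : phiP co c b k n n = (c n).phi k (b n) := by
  simp only [phiP, Finset.Ioc_self, Finset.sum_empty]
  rw [wb_add_zero]

lemma phiP_step (n p : ℕ) (hp : p ≤ n) :
    phiP co c b k (n + 1) p
      = phiP co c b k n p + ((co k ((c (n+1)).wt (b (n+1))) : ℤ) : WithBot ℤ) := by
  simp only [phiP]
  rw [wb_add_add, Finset.sum_Ioc_succ_top hp]

lemma epsT_succ (n : ℕ) :
    epsT co c b k (n + 1) = max (epsT co c b k n) (epsP co c b k (n + 1)) := by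
  simp only [epsT, epsP, iterCrys, iterElt, PreCrystal.tensor, iter_wt, map_sum]

lemma phiT_succ (n : ℕ) :
    phiT co c b k (n + 1)
      = max ((c (n+1)).phi k (b (n+1)))
          (phiT co c b k n + ((co k ((c (n+1)).wt (b (n+1))) : ℤ) : WithBot ℤ)) := by
  simp only [phiT, iterCrys, iterElt, PreCrystal.tensor]

lemma epsP_le (n : ℕ) : ∀ p ≤ n, epsP co c b k p ≤ epsT co c b k n := by
  induction n with
  | zero =>
    intro p hp
    interval_cases p
    rw [epsT_zero]
  | succ n ih =>
    intro p hp
    rw [epsT_succ]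
    rcases Nat.lt_succ_iff_lt_or_eq.mp (Nat.lt_succ_of_le hp) with h | h
    · exact le_max_of_le_left (ih p (Nat.lt_succ_iff.mp h))
    · rw [h]; exact le_max_right _ _

lemma epsP_exists (n : ℕ) : ∃ p ≤ n, epsP co c b k p = epsT co c b k n := by
  induction n with
  | zero => exact ⟨0, le_refl 0, (epsT_zero co c b k).symm⟩
  | succ n ih =>
    rcases le_total (epsP co c b k (n + 1)) (epsT co c b k n) with h | h
    · obtain ⟨p, hp, hpe⟩ := ih
      exact ⟨p, hp.trans (Nat.le_succ n), by rw [epsT_succ, max_eq_left h, hpe]⟩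
    · exact ⟨n + 1, le_refl _, by rw [epsT_succ, max_eq_right h]⟩

lemma epsP_add (n : ℕ) :
    epsP co c b k (n + 1)
        + ((∑ q ∈ Finset.range (n + 1), co k ((c q).wt (b q)) : ℤ) : WithBot ℤ)
      = (c (n+1)).eps k (b (n+1)) := by
  simp only [epsP]
  rw [wb_add_add, neg_add_cancel, wb_add_zero]

variable {α : I → P}

lemma phiT_eq (hc : ∀ n, IsCrystal α co (c n)) (n : ℕ) :
    phiT co c b k n = epsT co c b k n
      + ((∑ q ∈ Finset.range (n + 1), co k ((c q).wt (b q)) : ℤ) : WithBot ℤ) := by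
  induction n with
  | zero =>
    show (c 0).phi k (b 0) = (c 0).eps k (b 0) + _
    rw [(hc 0).phi_eq, Finset.sum_range_one]
  | succ n ih =>
    rw [phiT_succ, (hc (n+1)).phi_eq, ih, epsT_succ, ← max_add_add_right,
      max_comm ((c (n+1)).eps k (b (n+1))
        + ((co k ((c (n+1)).wt (b (n+1))) : ℤ) : WithBot ℤ))]
    congr 1
    · rw [wb_add_add]
      congr 2
      exact (Finset.sum_range_succ (fun q => co k ((c q).wt (b q))) (n+1)).symm
    · simp only [epsP]
      rw [wb_add_add]
      congr 2
      rw [Finset.sum_range_succ (fun q => co k ((c q).wt (b q))) (n+1)]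
      ring

lemma iterElt_update_lt {p : ℕ} (x : Bf p) :
    ∀ m, m < p → iterElt Bf (Function.update b p x) m = iterElt Bf b m := by
  intro m
  induction m with
  | zero =>
    intro h
    show Function.update b p x 0 = b 0
    exact Function.update_of_ne (by omega) _ _
  | succ m ih =>
    intro h
    show (iterElt Bf (Function.update b p x) m, Function.update b p x (m+1))
        = (iterElt Bf b m, b (m+1))
    rw [ih (by omega), Function.update_of_ne (by omega)]

end Aux
/-- in the iterated tensor product `B 0 ⊗ ⋯ ⊗ B n`, the operator
`ẽ_k` acts on the factor `b_p` where `p` is minimal with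
`ε_k^p = ε_k(b₀ ⊗ ⋯ ⊗ b_n)`, and `f̃_k` acts on the factor `b_p` where `p` is
maximal with `φ_k^p = φ_k(b₀ ⊗ ⋯ ⊗ b_n)`; here
`ε_k^p = ε_k(b_p) − ∑_{q<p} wt_k(b_q)` and
`φ_k^p = φ_k(b_p) + ∑_{q>p} wt_k(b_q)`. -/
theorem iter_tensor_e_f {I P : Type*} [AddCommGroup P]
    (α : I → P) (co : I → P →+ ℤ)
    (Bf : ℕ → Type u) (c : ∀ n, PreCrystal I P (Bf n))
    (hc : ∀ n, IsCrystal α co (c n))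
    (b : ∀ n, Bf n) (n : ℕ) (k : I) :
    (∀ p : ℕ, p ≤ n →
      ((c p).eps k (b p)
          + ((-(∑ q ∈ Finset.range p, co k ((c q).wt (b q))) : ℤ) : WithBot ℤ)
        = (iterCrys co Bf c n).eps k (iterElt Bf b n)) →
      (∀ q : ℕ, q < p →
        ((c q).eps k (b q)
            + ((-(∑ r ∈ Finset.range q, co k ((c r).wt (b r))) : ℤ) : WithBot ℤ)
          ≠ (iterCrys co Bf c n).eps k (iterElt Bf b n))) →
      (iterCrys co Bf c n).e k (iterElt Bf b n)
        = ((c p).e k (b p)).map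
            (fun x => iterElt Bf (Function.update b p x) n)) ∧
    (∀ p : ℕ, p ≤ n →
      ((c p).phi k (b p)
          + ((∑ q ∈ Finset.Ioc p n, co k ((c q).wt (b q)) : ℤ) : WithBot ℤ)
        = (iterCrys co Bf c n).phi k (iterElt Bf b n)) →
      (∀ q : ℕ, p < q → q ≤ n →
        ((c q).phi k (b q)
            + ((∑ r ∈ Finset.Ioc q n, co k ((c r).wt (b r)) : ℤ) : WithBot ℤ)
          ≠ (iterCrys co Bf c n).phi k (iterElt Bf b n))) →
      (iterCrys co Bf c n).f k (iterElt Bf b n)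
        = ((c p).f k (b p)).map
            (fun x => iterElt Bf (Function.update b p x) n)) := by
  induction n with
  | zero =>
    constructor
    · intro p hp heq hne
      interval_cases p
      show (c 0).e k (b 0) = ((c 0).e k (b 0)).map fun x => Function.update b 0 x 0
      cases hx : (c 0).e k (b 0) <;> simp
    · intro p hp heq hne
      interval_cases p
      show (c 0).f k (b 0) = ((c 0).f k (b 0)).map fun x => Function.update b 0 x 0
      cases hx : (c 0).f k (b 0) <;> simp
  | succ n ih =>
    obtain ⟨ihE, ihF⟩ := ih
    have hPhi := phiT_eq co c b k hc n
    constructor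
    · -- the e part
      intro p hp heq hne
      change epsP co c b k p = epsT co c b k (n+1) at heq
      have hne' : ∀ q < p, epsP co c b k q ≠ epsT co c b k (n+1) := hne
      have hA := epsT_succ co c b k n
      have hIff : (c (n+1)).eps k (b (n+1)) ≤ (iterCrys co Bf c n).phi k (iterElt Bf b n)
          ↔ epsP co c b k (n+1) ≤ epsT co c b k n := by
        rw [show (iterCrys co Bf c n).phi k (iterElt Bf b n) = phiT co c b k n from rfl,
          hPhi, ← epsP_add co c b k n, wb_le_iff]
      by_cases hcase : epsP co c b k (n+1) ≤ epsT co c b k n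
      · -- e acts on the first factor
        have hc1 := hIff.mpr hcase
        have hEn : epsT co c b k (n+1) = epsT co c b k n := by rw [hA, max_eq_left hcase]
        have hpn : p ≤ n := by
          rcases eq_or_lt_of_le hp with h | h
          · exfalso
            obtain ⟨q, hq, hq2⟩ := epsP_exists co c b k n
            exact hne' q (by omega) (hq2.trans hEn.symm)
          · omega
        show (if (c (n+1)).eps k (b (n+1)) ≤ (iterCrys co Bf c n).phi k (iterElt Bf b n)
            then ((iterCrys co Bf c n).e k (iterElt Bf b n)).map
              (fun x => (x, b (n+1)))
            else ((c (n+1)).e k (b (n+1))).map (fun x => (iterElt Bf b n, x))) = _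
        rw [if_pos hc1, ihE p hpn (heq.trans hEn)
          (fun q hq h => hne' q hq (h.trans hEn.symm))]
        cases hx : (c p).e k (b p) <;>
          simp [iterElt, Function.update_of_ne (show n+1 ≠ p by omega)] <;> rfl
      · -- e acts on the second factor
        have hlt := lt_of_not_ge hcase
        have hEn : epsT co c b k (n+1) = epsP co c b k (n+1) := by
          rw [hA, max_eq_right hlt.le]
        have hp1 : p = n + 1 := by
          by_contra h
          have h2 := epsP_le co c b k n p (by omega)
          rw [heq, hEn] at h2
          exact absurd h2 (not_le.mpr hlt)
        subst hp1
        have hc1 : ¬ ((c (n+1)).eps k (b (n+1))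
            ≤ (iterCrys co Bf c n).phi k (iterElt Bf b n)) := fun h => hcase (hIff.mp h)
        show (if (c (n+1)).eps k (b (n+1)) ≤ (iterCrys co Bf c n).phi k (iterElt Bf b n)
            then ((iterCrys co Bf c n).e k (iterElt Bf b n)).map
              (fun x => (x, b (n+1)))
            else ((c (n+1)).e k (b (n+1))).map (fun x => (iterElt Bf b n, x))) = _
        rw [if_neg hc1]
        cases hx : (c (n+1)).e k (b (n+1)) <;>
          simp [iterElt, iterElt_update_lt, Nat.lt_succ_self] <;> rfl
    · -- the f part
      intro p hp heq hne
      change phiP co c b k (n+1) p = phiT co c b k (n+1) at heq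
      have hne' : ∀ q, p < q → q ≤ n+1 →
          phiP co c b k (n+1) q ≠ phiT co c b k (n+1) := hne
      have hB := phiT_succ co c b k n
      have hIff : (c (n+1)).eps k (b (n+1)) < (iterCrys co Bf c n).phi k (iterElt Bf b n)
          ↔ (c (n+1)).phi k (b (n+1)) < phiT co c b k n
              + ((co k ((c (n+1)).wt (b (n+1))) : ℤ) : WithBot ℤ) := by
        rw [(hc (n+1)).phi_eq, wb_lt_iff]
        rfl
      rcases eq_or_lt_of_le hp with hp1 | hp1
      · -- f acts on the last factor
        subst hp1
        rw [phiP_self] at heq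
        have hge : phiT co c b k n
            + ((co k ((c (n+1)).wt (b (n+1))) : ℤ) : WithBot ℤ)
            ≤ (c (n+1)).phi k (b (n+1)) := by
          rw [heq, hB]; exact le_max_right _ _
        have hc1 : ¬ ((c (n+1)).eps k (b (n+1))
            < (iterCrys co Bf c n).phi k (iterElt Bf b n)) :=
          fun h => absurd hge (not_le.mpr (hIff.mp h))
        show (if (c (n+1)).eps k (b (n+1)) < (iterCrys co Bf c n).phi k (iterElt Bf b n)
            then ((iterCrys co Bf c n).f k (iterElt Bf b n)).map
              (fun x => (x, b (n+1)))
            else ((c (n+1)).f k (b (n+1))).map (fun x => (iterElt Bf b n, x))) = _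
        rw [if_neg hc1]
        cases hx : (c (n+1)).f k (b (n+1)) <;>
          simp [iterElt, iterElt_update_lt, Nat.lt_succ_self] <;> rfl
      · -- f acts among the first n+1 factors
        have hpn : p ≤ n := by omega
        have hneq : (c (n+1)).phi k (b (n+1)) ≠ phiT co c b k (n+1) := by
          have := hne' (n+1) (by omega) (le_refl _)
          rwa [phiP_self] at this
        have hmax : phiT co c b k (n+1) = phiT co c b k n
            + ((co k ((c (n+1)).wt (b (n+1))) : ℤ) : WithBot ℤ) := by
          rcases max_choice ((c (n+1)).phi k (b (n+1)))
            (phiT co c b k n + ((co k ((c (n+1)).wt (b (n+1))) : ℤ) : WithBot ℤ)) with h | h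
          · exact absurd (hB.trans h).symm hneq
          · exact hB.trans h
        have hlt : (c (n+1)).phi k (b (n+1)) < phiT co c b k n
            + ((co k ((c (n+1)).wt (b (n+1))) : ℤ) : WithBot ℤ) := by
          refine lt_of_le_of_ne ?_ (fun h => hneq (h.trans hmax.symm))
          rw [← hmax, hB]; exact le_max_left _ _
        have hc1 := hIff.mpr hlt
        have heq2 : phiP co c b k n p = phiT co c b k n := by
          apply wb_cancel (co k ((c (n+1)).wt (b (n+1))))
          rw [← phiP_step co c b k n p hpn, heq, hmax]
        have hne2 : ∀ q, p < q → q ≤ n → phiP co c b k n q ≠ phiT co c b k n := by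
          intro q hq1 hq2 h
          refine hne' q hq1 (by omega) ?_
          rw [phiP_step co c b k n q hq2, h, hmax]
        show (if (c (n+1)).eps k (b (n+1)) < (iterCrys co Bf c n).phi k (iterElt Bf b n)
            then ((iterCrys co Bf c n).f k (iterElt Bf b n)).map
              (fun x => (x, b (n+1)))
            else ((c (n+1)).f k (b (n+1))).map (fun x => (iterElt Bf b n, x))) = _
        rw [if_pos hc1, ihF p hpn heq2 hne2]
        cases hx : (c p).f k (b p) <;>
          simp [iterElt, Function.update_of_ne (show n+1 ≠ p by omega)] <;> rfl
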